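/- Let V be an n×(n-1) real matrix whose columns extend to an orthogonal basis together with the normalized all-ones vector, i.e., [V, e/√n] is an orthogonal matrix. Define K_V(X) = K(VXVᵀ) for symmetric (n-1)×(n-1) matrices X, where K is the Lindenstrauss operator. Then the composition K_V* ∘ K_V is a positive definite linear operator on the space of symmetric (n-1)×(n-1) matrices; equivalently, K_V(X) = 0 implies X = 0, and ⟨X, K_V*(K_V(X))⟩ = ‖K_V(X)‖²_F > 0 for all X ≠ 0. -/

import Mathlib

open Matrix BigOperators

noncomputable section

/-- The Lindenstrauss operator. -/
def lind {ι : Type*} [Fintype ι] (M : Matrix ι ι ℝ) : Matrix ι ι ℝ :=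
  Matrix.of fun i j => M i i + M j j - 2 * M i j

/-- The adjoint of the Lindenstrauss operator: `K*(D) = 2(Diag(De) - D)`. -/
def lindAdj {ι : Type*} [Fintype ι] [DecidableEq ι] (D : Matrix ι ι ℝ) : Matrix ι ι ℝ :=
  (2 : ℝ) • (Matrix.diagonal (D *ᵥ fun _ => (1 : ℝ)) - D)

lemma lind_zero {ι : Type*} [Fintype ι] (M : Matrix ι ι ℝ)
    (h1 : M *ᵥ (fun _ => (1:ℝ)) = 0) (h : lind M = 0) : M = 0 := by
  have key : ∀ i j, M i i + M j j - 2 * M i j = 0 := by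
    intro i j
    have := congrFun (congrFun h i) j
    simpa [lind] using this
  have hrow : ∀ i, ∑ j, M i j = 0 := by
    intro i
    have := congrFun h1 i
    simpa [mulVec, dotProduct] using this
  have hdiag : ∀ i, (Fintype.card ι : ℝ) * M i i + ∑ j, M j j = 0 := by
    intro i
    have : ∑ j, (M i i + M j j - 2 * M i j) = 0 := by
      simp [key]
    have h2 : ∑ j, (M i i + M j j - 2 * M i j)
        = (Fintype.card ι : ℝ) * M i i + ∑ j, M j j - 2 * ∑ j, M i j := by
      rw [Finset.sum_sub_distrib, Finset.sum_add_distrib, ← Finset.mul_sum]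
      simp [Finset.card_univ, mul_comm]
    rw [h2, hrow i] at this
    linarith
  rcases isEmpty_or_nonempty ι with hE | hN
  · ext i j; exact absurd ⟨i⟩ (not_nonempty_iff.mpr hE)
  · have hcard : (0:ℝ) < (Fintype.card ι : ℝ) := by
      exact_mod_cast Fintype.card_pos
    have htr : ∑ j, M j j = 0 := by
      have h3 : ∑ i : ι, ((Fintype.card ι : ℝ) * M i i + ∑ j, M j j) = 0 := by
        simp [hdiag]
      rw [Finset.sum_add_distrib, ← Finset.mul_sum, Finset.sum_const, Finset.card_univ,
        nsmul_eq_mul] at h3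
      nlinarith
    have hdd : ∀ i, M i i = 0 := by
      intro i
      have := hdiag i
      rw [htr] at this
      have : (Fintype.card ι : ℝ) * M i i = 0 := by linarith
      rcases mul_eq_zero.mp this with h | h
      · exact absurd h (ne_of_gt hcard)
      · exact h
    ext i j
    have := key i j
    rw [hdd i, hdd j] at this
    simp only [Matrix.zero_apply]
    linarith

lemma ite_sum_helper {ι : Type*} [Fintype ι] [DecidableEq ι] (x : ι) (a S T : ι → ℝ) :
    ∑ x₁, a x₁ * (2 * ((if x₁ = x then S x₁ else 0) - T x₁))
      = a x * (2 * S x) - ∑ x₁, a x₁ * (2 * T x₁) := by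
  have h : ∀ x₁, a x₁ * (2 * ((if x₁ = x then S x₁ else 0) - T x₁))
      = (if x₁ = x then a x₁ * (2 * S x₁) else 0) - a x₁ * (2 * T x₁) := by
    intro x₁; split <;> ring
  rw [Finset.sum_congr rfl (fun x₁ _ => h x₁), Finset.sum_sub_distrib,
    Finset.sum_ite_eq' Finset.univ x]
  simp

lemma trace_adj {ι : Type*} [Fintype ι] [DecidableEq ι] (M : Matrix ι ι ℝ) (hM : Mᵀ = M) :
    Matrix.trace (Mᵀ * lindAdj (lind M)) = Matrix.trace ((lind M)ᵀ * lind M) := by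
  have hMs : ∀ i j, M j i = M i j := fun i j => by
    simpa [Matrix.transpose_apply] using (congrFun (congrFun hM j) i).symm
  simp only [Matrix.trace, Matrix.diag, Matrix.mul_apply, Matrix.transpose_apply, lindAdj, lind,
    Matrix.smul_apply, Matrix.sub_apply, Matrix.diagonal_apply, Matrix.mulVec, dotProduct,
    mul_one, smul_eq_mul, Matrix.of_apply]
  refine Eq.trans (Finset.sum_congr rfl fun x _ => ite_sum_helper x _ _ _) ?_
  simp only [mul_add, add_mul, mul_sub, sub_mul, Finset.sum_add_distrib, Finset.sum_sub_distrib,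
    Finset.mul_sum, Finset.sum_mul, Finset.sum_const, Finset.card_univ, nsmul_eq_mul]
  ring_nf
  have congr2 : ∀ f g : ι → ι → ℝ, (∀ x y, f x y = g x y) →
      (∑ x, ∑ y, f x y) = ∑ x, ∑ y, g x y := fun f g h =>
    Finset.sum_congr rfl fun x _ => Finset.sum_congr rfl fun y _ => h x y
  set c := (Fintype.card ι : ℝ) with hc
  set T := ∑ x : ι, ∑ y : ι, M x x * M y y with hT
  set u := ∑ x : ι, ∑ y : ι, M x x * M x y with hu
  set p := ∑ x : ι, ∑ y : ι, M x y * M x y with hp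
  set s := ∑ x : ι, M x x * M x x with hs
  have ha1 : ∑ x : ι, M x x ^ 2 * c * 2 = 2 * c * s := by
    rw [hs, Finset.mul_sum]
    exact Finset.sum_congr rfl fun x _ => by ring
  have ha2 : ∑ x : ι, ∑ y : ι, M x x * 2 * M y y = 2 * T := by
    rw [hT, Finset.mul_sum]
    refine Finset.sum_congr rfl fun x _ => ?_
    rw [Finset.mul_sum]
    exact Finset.sum_congr rfl fun y _ => by ring
  have ha3 : ∑ x : ι, ∑ y : ι, M x x * 2 * 2 * M x y = 4 * u := by
    rw [hu, Finset.mul_sum]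
    refine Finset.sum_congr rfl fun x _ => ?_
    rw [Finset.mul_sum]
    exact Finset.sum_congr rfl fun y _ => by ring
  have ha4 : ∑ x : ι, ∑ y : ι, M y x * 2 * M y y = 2 * u := by
    rw [Finset.sum_comm, hu, Finset.mul_sum]
    refine Finset.sum_congr rfl fun x _ => ?_
    rw [Finset.mul_sum]
    exact Finset.sum_congr rfl fun y _ => by ring
  have ha5 : ∑ x : ι, ∑ y : ι, M y x * 2 * M x x = 2 * u := by
    rw [hu, Finset.mul_sum]
    refine Finset.sum_congr rfl fun x _ => ?_
    rw [Finset.mul_sum]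
    exact Finset.sum_congr rfl fun y _ => by rw [hMs x y]; ring
  have ha6 : ∑ x : ι, ∑ y : ι, M y x * 2 * 2 * M y x = 4 * p := by
    rw [Finset.sum_comm, hp, Finset.mul_sum]
    refine Finset.sum_congr rfl fun x _ => ?_
    rw [Finset.mul_sum]
    exact Finset.sum_congr rfl fun y _ => by ring
  have hb1 : ∑ x : ι, ∑ y : ι, M y y * M x x = T := by
    rw [hT]
    exact congr2 _ _ fun x y => by ring
  have hb2 : ∑ x : ι, ∑ y : ι, 2 * M y x * M y y = 2 * u := by
    rw [Finset.sum_comm, hu, Finset.mul_sum]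
    refine Finset.sum_congr rfl fun x _ => ?_
    rw [Finset.mul_sum]
    exact Finset.sum_congr rfl fun y _ => by ring
  have hb4 : ∑ x : ι, ∑ y : ι, 2 * M y x * M x x = 2 * u := by
    rw [hu, Finset.mul_sum]
    refine Finset.sum_congr rfl fun x _ => ?_
    rw [Finset.mul_sum]
    exact Finset.sum_congr rfl fun y _ => by rw [hMs x y]; ring
  have hb5 : (∑ x : ι, c * M x x * M x x) * 2 = 2 * c * s := by
    rw [hs, Finset.sum_mul, Finset.mul_sum]
    exact Finset.sum_congr rfl fun x _ => by ring
  have hb6 : ∑ x : ι, ∑ y : ι, M y y * 2 * M y x = 2 * u := by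
    rw [Finset.sum_comm, hu, Finset.mul_sum]
    refine Finset.sum_congr rfl fun x _ => ?_
    rw [Finset.mul_sum]
    exact Finset.sum_congr rfl fun y _ => by ring
  have hb7 : ∑ x : ι, ∑ y : ι, M x x * 2 * M y x = 2 * u := by
    rw [hu, Finset.mul_sum]
    refine Finset.sum_congr rfl fun x _ => ?_
    rw [Finset.mul_sum]
    exact Finset.sum_congr rfl fun y _ => by rw [hMs x y]; ring
  have hb8 : ∑ x : ι, ∑ y : ι, 2 * M y x * 2 * M y x = 4 * p := by
    rw [Finset.sum_comm, hp, Finset.mul_sum]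
    refine Finset.sum_congr rfl fun x _ => ?_
    rw [Finset.mul_sum]
    exact Finset.sum_congr rfl fun y _ => by ring
  have hc1 : ∑ x : ι, ∑ y : ι, M x x * M y y * 2 = 2 * T := by
    rw [hT, Finset.mul_sum]
    refine Finset.sum_congr rfl fun x _ => ?_
    rw [Finset.mul_sum]
    exact Finset.sum_congr rfl fun y _ => by ring
  have hc2 : ∑ x : ι, ∑ y : ι, M x x * M x y * 4 = 4 * u := by
    rw [hu, Finset.mul_sum]
    refine Finset.sum_congr rfl fun x _ => ?_
    rw [Finset.mul_sum]
    exact Finset.sum_congr rfl fun y _ => by ring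
  have hc3 : (∑ x : ι, c * M x x ^ 2) * 2 = 2 * c * s := by
    rw [hs, Finset.sum_mul, Finset.mul_sum]
    exact Finset.sum_congr rfl fun x _ => by ring
  have hc4 : ∑ x : ι, ∑ y : ι, M y y * M y x * 2 = 2 * u := by
    rw [Finset.sum_comm, hu, Finset.mul_sum]
    refine Finset.sum_congr rfl fun x _ => ?_
    rw [Finset.mul_sum]
    exact Finset.sum_congr rfl fun y _ => by ring
  have hc5 : ∑ x : ι, ∑ y : ι, M x x * M y x * 2 = 2 * u := by
    rw [hu, Finset.mul_sum]
    refine Finset.sum_congr rfl fun x _ => ?_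
    rw [Finset.mul_sum]
    exact Finset.sum_congr rfl fun y _ => by rw [hMs x y]; ring
  linarith [ha1, ha2, ha3, ha4, ha5, ha6, hb1, hb2, hb4, hb5, hb6, hb7, hb8, hc1, hc2, hc3, hc4, hc5]

lemma trace_sq_pos {ι : Type*} [Fintype ι] (D : Matrix ι ι ℝ) (hD : D ≠ 0) :
    0 < Matrix.trace (Dᵀ * D) := by
  have hne : ∃ j k, D j k ≠ 0 := by
    by_contra h
    push_neg at h
    exact hD (by ext j k; simpa using h j k)
  obtain ⟨j, k, hjk⟩ := hne
  have hexp : Matrix.trace (Dᵀ * D) = ∑ x : ι, ∑ y : ι, D y x * D y x := by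
    simp [Matrix.trace, Matrix.diag, Matrix.mul_apply, Matrix.transpose_apply]
  rw [hexp]
  apply Finset.sum_pos'
  · intro x _
    exact Finset.sum_nonneg fun y _ => mul_self_nonneg _
  · exact ⟨k, Finset.mem_univ k,
      Finset.sum_pos' (fun y _ => mul_self_nonneg _)
        ⟨j, Finset.mem_univ j, mul_self_pos.mpr hjk⟩⟩

/-- `K_V* ∘ K_V` is a positive definite linear operator on symmetric matrices:
`K_V(X) = 0 → X = 0`, and `⟨X, K_V*(K_V X)⟩ = ‖K_V X‖²_F > 0` for `X ≠ 0`. -/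
theorem KV_star_KV_posdef (n : ℕ) (V : Matrix (Fin n) (Fin (n - 1)) ℝ)
    (hV : Vᵀ * V = 1) (hVe : Vᵀ *ᵥ (fun _ => (1 : ℝ)) = 0) :
    (∀ X : Matrix (Fin (n - 1)) (Fin (n - 1)) ℝ, X.IsSymm →
        lind (V * X * Vᵀ) = 0 → X = 0) ∧
    (∀ X : Matrix (Fin (n - 1)) (Fin (n - 1)) ℝ, X.IsSymm → X ≠ 0 →
        Matrix.trace (Xᵀ * (Vᵀ * lindAdj (lind (V * X * Vᵀ)) * V)) =
          Matrix.trace ((lind (V * X * Vᵀ))ᵀ * lind (V * X * Vᵀ)) ∧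
        0 < Matrix.trace ((lind (V * X * Vᵀ))ᵀ * lind (V * X * Vᵀ))) := by
  have part1 : ∀ X : Matrix (Fin (n - 1)) (Fin (n - 1)) ℝ, X.IsSymm →
      lind (V * X * Vᵀ) = 0 → X = 0 := by
    intro X hX h0
    have hMe : (V * X * Vᵀ) *ᵥ (fun _ => (1:ℝ)) = 0 := by
      rw [← Matrix.mulVec_mulVec, hVe, Matrix.mulVec_zero]
    have hM0 : V * X * Vᵀ = 0 := lind_zero _ hMe h0
    have e : Vᵀ * (V * X * Vᵀ) * V = (Vᵀ * V) * X * (Vᵀ * V) := by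
      simp only [Matrix.mul_assoc]
    rw [hV, Matrix.one_mul, Matrix.mul_one, hM0] at e
    simpa using e.symm
  refine ⟨part1, fun X hX hXne => ?_⟩
  have hMsym : (V * X * Vᵀ)ᵀ = V * X * Vᵀ := by
    have hXe : Xᵀ = X := hX
    simp [Matrix.transpose_mul, Matrix.mul_assoc, hXe]
  have key := trace_adj (V * X * Vᵀ) hMsym
  have htr : Matrix.trace (Xᵀ * (Vᵀ * lindAdj (lind (V * X * Vᵀ)) * V))
      = Matrix.trace ((V * X * Vᵀ)ᵀ * lindAdj (lind (V * X * Vᵀ))) := by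
    set A := lindAdj (lind (V * X * Vᵀ)) with hA
    have h1 : Xᵀ * (Vᵀ * A * V) = (Xᵀ * Vᵀ * A) * V := by
      simp only [Matrix.mul_assoc]
    have h2 : V * (Xᵀ * Vᵀ * A) = (V * X * Vᵀ)ᵀ * A := by
      have hXe : Xᵀ = X := hX
      simp [Matrix.transpose_mul, Matrix.mul_assoc, hXe, hMsym]
    rw [h1, Matrix.trace_mul_comm, h2]
  refine ⟨htr.trans key, ?_⟩
  apply trace_sq_pos
  intro h0
  exact hXne (part1 X hX h0)
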